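/- Let c : ℝ → ℝ be continuously differentiable with 0 < c_0 ≤ c(x) for all x. For x_0 ∈ ℝ let X(t, x_0) denote the solution of X' = c(X), X(0,x_0) = x_0, on [0, T]. Then for each t ∈ [0,T], the map x ↦ X(t,x) is differentiable and ∂_x X(t, x_0) = c(X(t,x_0)) / c(x_0); in particular ∂_x X(t, x_0) > 0 and x ↦ X(t,x) is strictly increasing. -/

import Mathlib

open Filter Topology

/-- for `c` C¹ with `0 < c₀ ≤ c`, the flow `X` of `X' = c(X)`
satisfies `∂ₓ X(t, x₀) = c(X(t,x₀)) / c(x₀) > 0`, and `x ↦ X(t,x)` is strictly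
increasing, for each `t ∈ [0,T]`. -/
theorem stmt9 (c : ℝ → ℝ) (hc : ContDiff ℝ 1 c)
    (c₀ : ℝ) (hc₀ : 0 < c₀) (hlb : ∀ x, c₀ ≤ c x)
    (T : ℝ) (hT : 0 ≤ T)
    (X : ℝ → ℝ → ℝ)
    (hX0 : ∀ x₀, X 0 x₀ = x₀)
    (hX : ∀ x₀, ∀ t ∈ Set.Icc 0 T, HasDerivAt (fun s => X s x₀) (c (X t x₀)) t) :
    ∀ t ∈ Set.Icc 0 T, ∀ x₀,
      HasDerivAt (fun x => X t x) (c (X t x₀) / c x₀) x₀ ∧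
      0 < c (X t x₀) / c x₀ ∧
      StrictMono fun x => X t x := by
  have hcpos : ∀ x, 0 < c x := fun x => hc₀.trans_le (hlb x)
  have hcont : Continuous fun x => (c x)⁻¹ :=
    hc.continuous.inv₀ fun x => (hcpos x).ne'
  set Φ : ℝ → ℝ := fun x => ∫ y in (0:ℝ)..x, (c y)⁻¹ with hΦdef
  have hΦ : ∀ x, HasDerivAt Φ (c x)⁻¹ x := by
    intro x
    exact intervalIntegral.integral_hasDerivAt_right (hcont.intervalIntegrable _ _)
      (hcont.stronglyMeasurableAtFilter _ _) hcont.continuousAt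
  have hΦstrict : ∀ x, HasStrictDerivAt Φ (c x)⁻¹ x := by
    intro x
    exact hasStrictDerivAt_of_hasDerivAt_of_continuousAt
      (Filter.Eventually.of_forall hΦ) hcont.continuousAt
  have hΦmono : StrictMono Φ := by
    apply strictMono_of_deriv_pos
    intro x
    rw [(hΦ x).deriv]
    exact inv_pos.2 (hcpos x)
  -- key identity : Φ (X t x) = t + Φ x
  have key : ∀ x, ∀ t ∈ Set.Icc (0:ℝ) T, Φ (X t x) = t + Φ x := by
    intro x t ht
    have hd : ∀ s ∈ Set.Icc (0:ℝ) T,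
        HasDerivAt (fun s => Φ (X s x) - s) 0 s := by
      intro s hs
      have h1 := ((hΦ (X s x)).comp s (hX x s hs)).sub (hasDerivAt_id s)
      have h2 : HasDerivAt (fun s => Φ (X s x) - s) ((c (X s x))⁻¹ * c (X s x) - 1) s := h1
      rw [inv_mul_cancel₀ (hcpos (X s x)).ne', sub_self] at h2
      exact h2
    have hconst := constant_of_has_deriv_right_zero
      (f := fun s => Φ (X s x) - s) (a := 0) (b := T)
      (fun s hs => ((hd s hs).continuousAt).continuousWithinAt)
      (fun s hs => ((hd s (Set.mem_Icc.2 ⟨hs.1, hs.2.le⟩)).hasDerivWithinAt))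
    have := hconst t ht
    simp only [hX0, sub_zero] at this
    linarith
  intro t ht x₀
  have hmonoF : StrictMono fun x => X t x := by
    intro a b hab
    have : Φ (X t a) < Φ (X t b) := by
      rw [key a t ht, key b t ht]
      linarith [hΦmono hab]
    exact hΦmono.lt_iff_lt.mp this
  refine ⟨?_, div_pos (hcpos _) (hcpos _), hmonoF⟩
  -- local inverse of Φ at a := X t x₀
  set a := X t x₀ with ha
  have hne : (c a)⁻¹ ≠ 0 := inv_ne_zero (hcpos a).ne'
  set g := (hΦstrict a).localInverse Φ (c a)⁻¹ a hne with hg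
  have hginv : HasStrictDerivAt g ((c a)⁻¹)⁻¹ (Φ a) :=
    (hΦstrict a).to_localInverse hne
  have hright : ∀ᶠ z in 𝓝 (Φ a), Φ (g z) = z :=
    ((hΦstrict a).hasStrictFDerivAt_equiv hne).eventually_right_inverse
  -- eventually, g (t + Φ x) = X t x
  have hΦa : Φ a = t + Φ x₀ := key x₀ t ht
  have heq : ∀ᶠ x in 𝓝 x₀, g (t + Φ x) = X t x := by
    have hΦcont : Continuous Φ :=
      continuous_iff_continuousAt.mpr fun x => (hΦ x).continuousAt
    have htend : Tendsto (fun x => t + Φ x) (𝓝 x₀) (𝓝 (Φ a)) := by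
      rw [hΦa]
      exact (continuous_const.add hΦcont).continuousAt
    filter_upwards [htend.eventually hright] with x hx
    have : Φ (g (t + Φ x)) = Φ (X t x) := by rw [hx, key x t ht]
    exact hΦmono.injective this
  have hcomp : HasDerivAt (fun x => g (t + Φ x)) (((c a)⁻¹)⁻¹ * (c x₀)⁻¹) x₀ := by
    have hin : HasDerivAt (fun x => t + Φ x) (c x₀)⁻¹ x₀ := by
      simpa using (hΦ x₀).const_add t
    have hginv' : HasDerivAt g ((c a)⁻¹)⁻¹ (t + Φ x₀) := hΦa ▸ hginv.hasDerivAt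
    exact hginv'.comp x₀ hin
  have := hcomp.congr_of_eventuallyEq (heq.mono fun x hx => hx.symm)
  simpa [inv_inv, div_eq_mul_inv] using this
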